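/- Let n ≥ 2 be even and let F be the intermediate firing configuration with 2^n initial chips. Then F(n/2 + C(n, n/2)/2, n/2 + C(n, n/2)/2) = 0; consequently every entry of row n + C(n, n/2) + 1 of F is zero, so the chip-firing process with 2^n chips at the origin terminates. -/
import Mathlib

section Aux
variable (F : ℤ → ℤ → ℕ)
variable (hneg : ∀ x y : ℤ, x < 0 ∨ y < 0 → F x y = 0)
variable (hrec : ∀ x y : ℤ, 0 ≤ x → 0 ≤ y → ¬(x = 0 ∧ y = 0) →
      F x y = F (x - 1) y / 2 + F x (y - 1) / 2)

include hneg hrec in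
lemma Fsymm : ∀ (k : ℕ) (x y : ℤ), x + y = (k : ℤ) → F x y = F y x := by
  intro k
  induction k using Nat.strong_induction_on with
  | _ k ih =>
    intro x y hxy
    rcases lt_or_ge x 0 with hx | hx
    · rw [hneg x y (Or.inl hx), hneg y x (Or.inr hx)]
    rcases lt_or_ge y 0 with hy | hy
    · rw [hneg x y (Or.inr hy), hneg y x (Or.inl hy)]
    by_cases h0 : x = 0 ∧ y = 0
    · rw [h0.1, h0.2]
    have h0' : ¬(y = 0 ∧ x = 0) := fun h => h0 ⟨h.2, h.1⟩
    have hk : 1 ≤ k := by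
      rcases Nat.eq_zero_or_pos k with hk0 | hk0
      · exfalso; apply h0
        subst hk0
        constructor <;> omega
      · exact hk0
    have h1 : x - 1 + y = ((k - 1 : ℕ) : ℤ) := by push_cast; omega
    have h2 : x + (y - 1) = ((k - 1 : ℕ) : ℤ) := by push_cast; omega
    rw [hrec x y hx hy h0, hrec y x hy hx h0',
      ih (k-1) (by omega) (x-1) y h1, ih (k-1) (by omega) x (y-1) h2]
    ring

include hneg hrec in
lemma Fmono : ∀ (k : ℕ) (x y : ℤ), x + y = (k : ℤ) → 0 ≤ x → x + 2 ≤ y →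
    F x y ≤ F (x + 1) (y - 1) := by
  intro k
  induction k using Nat.strong_induction_on with
  | _ k ih =>
    intro x y hxy hx h2
    have hy : 0 ≤ y := by omega
    have e1 : F x y = F (x-1) y / 2 + F x (y-1) / 2 :=
      hrec x y hx hy (by omega)
    have e2 : F (x+1) (y-1) = F x (y-1) / 2 + F (x+1) (y-2) / 2 := by
      have := hrec (x+1) (y-1) (by omega) (by omega) (by omega)
      simpa [show x + 1 - 1 = x by ring, show y - 1 - 1 = y - 2 by ring] using this
    have key : F (x-1) y ≤ F (x+1) (y-2) := by
      rcases lt_or_ge (x-1) 0 with hx1 | hx1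
      · rw [hneg _ _ (Or.inl hx1)]; exact Nat.zero_le _
      have hk : 1 ≤ k := by omega
      have s1 : F (x-1) y ≤ F x (y-1) := by
        have := ih (k-1) (by omega) (x-1) y (by push_cast; omega) hx1 (by omega)
        simpa [show x - 1 + 1 = x by ring] using this
      rcases eq_or_lt_of_le h2 with he | hlt
      · have : F (x+1) (y-2) = F x (y-1) := by
          have hsym := Fsymm F hneg hrec (k-1) (x+1) (y-2) (by push_cast; omega)
          rw [hsym, show y - 2 = x by omega, show y - 1 = x + 1 by omega]
        omega
      · have s2 : F x (y-1) ≤ F (x+1) (y-2) := by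
          have := ih (k-1) (by omega) x (y-1) (by push_cast; omega) hx (by omega)
          simpa [show y - 1 - 1 = y - 2 by ring] using this
        omega
    rw [e1, e2]
    have := Nat.div_le_div_right (c := 2) key
    omega

end Aux

section Aux2
variable (n : ℕ) (F : ℤ → ℤ → ℕ)
variable (hneg : ∀ x y : ℤ, x < 0 ∨ y < 0 → F x y = 0)
variable (hzero : F 0 0 = 2 ^ n)
variable (hrec : ∀ x y : ℤ, 0 ≤ x → 0 ≤ y → ¬(x = 0 ∧ y = 0) →
      F x y = F (x - 1) y / 2 + F x (y - 1) / 2)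

include hneg hzero hrec in
lemma Finit : ∀ (s x y : ℕ), x + y = s → s ≤ n →
    F (x : ℤ) (y : ℤ) = 2 ^ (n - s) * Nat.choose s x := by
  intro s
  induction s using Nat.strong_induction_on with
  | _ s ih =>
    intro x y hxy hsn
    match x, y with
    | 0, 0 =>
      simp at hxy
      subst hxy
      simpa using hzero
    | 0, (y+1) =>
      have e : F 0 ((y:ℤ)+1) = F (-1) ((y:ℤ)+1) / 2 + F 0 (y:ℤ) / 2 := by
        have := hrec 0 ((y:ℤ)+1) le_rfl (by positivity) (by omega)
        simpa using this
      have hy : F 0 (y:ℤ) = 2 ^ (n - y) * Nat.choose y 0 :=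
        ih y (by omega) 0 y (by omega) (by omega)
      have hpow : 2 ^ (n - y) * Nat.choose y 0 = 2 * 2 ^ (n - (y+1)) := by
        simp [Nat.choose_zero_right]
        rw [show n - y = (n - (y+1)) + 1 by omega, pow_succ]
        ring
      rw [show ((0:ℕ):ℤ) = (0:ℤ) by norm_num, show (((y+1:ℕ)):ℤ) = (y:ℤ)+1 by push_cast; ring]
      rw [e, hneg (-1) _ (Or.inl (by norm_num)), hy, hpow]
      simp [hxy ▸ Nat.choose_zero_right s]
      omega
    | (x+1), 0 =>
      have e : F ((x:ℤ)+1) 0 = F (x:ℤ) 0 / 2 + F ((x:ℤ)+1) (-1) / 2 := by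
        have := hrec ((x:ℤ)+1) 0 (by positivity) le_rfl (by omega)
        simpa using this
      have hx : F (x:ℤ) 0 = 2 ^ (n - x) * Nat.choose x x :=
        ih x (by omega) x 0 (by omega) (by omega)
      have hpow : 2 ^ (n - x) * Nat.choose x x = 2 * 2 ^ (n - (x+1)) := by
        simp [Nat.choose_self]
        rw [show n - x = (n - (x+1)) + 1 by omega, pow_succ]
        ring
      rw [show (((x+1:ℕ)):ℤ) = (x:ℤ)+1 by push_cast; ring, show ((0:ℕ):ℤ) = (0:ℤ) by norm_num]
      rw [e, hneg _ (-1) (Or.inr (by norm_num)), hx, hpow]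
      rw [show s = x + 1 by omega, Nat.choose_self]
      omega
    | (x+1), (y+1) =>
      have e : F ((x:ℤ)+1) ((y:ℤ)+1) = F (x:ℤ) ((y:ℤ)+1) / 2 + F ((x:ℤ)+1) (y:ℤ) / 2 := by
        have := hrec ((x:ℤ)+1) ((y:ℤ)+1) (by positivity) (by positivity) (by omega)
        simpa using this
      have h1 : F (x:ℤ) ((y:ℤ)+1) = 2 ^ (n - (s-1)) * Nat.choose (s-1) x := by
        have := ih (s-1) (by omega) x (y+1) (by omega) (by omega)
        simpa [show (((y+1:ℕ)):ℤ) = (y:ℤ)+1 by push_cast; ring] using this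
      have h2 : F ((x:ℤ)+1) (y:ℤ) = 2 ^ (n - (s-1)) * Nat.choose (s-1) (x+1) := by
        have := ih (s-1) (by omega) (x+1) y (by omega) (by omega)
        simpa [show (((x+1:ℕ)):ℤ) = (x:ℤ)+1 by push_cast; ring] using this
      have hp : ∀ c : ℕ, 2 ^ (n - (s-1)) * c / 2 = 2 ^ (n - s) * c := by
        intro c
        rw [show n - (s-1) = (n - s) + 1 by omega, pow_succ]
        rw [show 2 ^ (n-s) * 2 * c = 2 * (2 ^ (n-s) * c) by ring]
        exact Nat.mul_div_cancel_left _ (by norm_num)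
      rw [show (((x+1:ℕ)):ℤ) = (x:ℤ)+1 by push_cast; ring,
          show (((y+1:ℕ)):ℤ) = (y:ℤ)+1 by push_cast; ring]
      rw [e, h1, h2, hp, hp, ← Nat.mul_add]
      congr 1
      rw [show s = (s-1) + 1 by omega]
      rw [Nat.choose_succ_succ (s-1) x]
      simp [Nat.add_comm]

lemma binom_ge (n : ℕ) : ∀ a : ℕ, 1 ≤ a → 2*a ≤ n → n ≤ Nat.choose n a := by
  intro a
  induction a with
  | zero => omega
  | succ a ih =>
    intro _ h2
    rcases Nat.eq_zero_or_pos a with ha | ha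
    · subst ha; simp
    · calc n ≤ Nat.choose n a := ih ha (by omega)
        _ ≤ Nat.choose n (a+1) := Nat.choose_le_succ_of_lt_half_left (by omega)

lemma binom_gap (n a : ℕ) (ha : 1 ≤ a) (h : 2*a+2 ≤ n) :
    Nat.choose n a + 2 ≤ Nat.choose n (a+1) := by
  have h1 := Nat.choose_succ_right_eq n a
  have h2 : n ≤ Nat.choose n a := binom_ge n a ha (by omega)
  by_contra hc
  push_neg at hc
  have h3 : Nat.choose n a * (a+2) ≤ Nat.choose n a * (n - a) :=
    Nat.mul_le_mul_left _ (by omega)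
  have h4 : Nat.choose n (a+1) * (a+1) ≤ (Nat.choose n a + 1) * (a+1) :=
    Nat.mul_le_mul_right _ (by omega)
  nlinarith [h1, h2, h3, h4]

include hneg hzero hrec in
lemma Rstrict : ∀ (s : ℕ), n ≤ s → ∀ x y : ℤ, 0 ≤ x → x + 2 ≤ y →
    x + y = (s : ℤ) → 2 ≤ F x y → F x y / 2 < F (x+1) (y-1) / 2 := by
  intro s hns
  induction s, hns using Nat.le_induction with
  | base =>
    intro x y hx h2 hsum hF2
    -- base case: row n, binomial coefficients
    obtain ⟨a, rfl⟩ : ∃ a : ℕ, x = (a : ℤ) := ⟨x.toNat, (Int.toNat_of_nonneg hx).symm⟩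
    have hy : y = ((n - a : ℕ) : ℤ) := by push_cast; omega
    have hxy : a + (n - a) = n := by omega
    have hFa : F (a:ℤ) y = Nat.choose n a := by
      rw [hy]
      have := Finit n F hneg hzero hrec n a (n-a) hxy le_rfl
      simpa using this
    have hFa1 : F ((a:ℤ)+1) (y-1) = Nat.choose n (a+1) := by
      have hy1 : y - 1 = ((n - (a+1) : ℕ) : ℤ) := by push_cast; omega
      rw [hy1, show ((a:ℤ)+1) = ((a+1 : ℕ) : ℤ) by push_cast; ring]
      have := Finit n F hneg hzero hrec n (a+1) (n-(a+1)) (by omega) le_rfl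
      simpa using this
    rw [hFa, hFa1]
    have ha1 : 1 ≤ a := by
      by_contra hc
      have : a = 0 := by omega
      rw [hFa, this] at hF2
      simp at hF2
    have := binom_gap n a ha1 (by omega)
    omega
  | succ s hs ih =>
    intro x y hx h2 hsum hF2
    set u := F (x-1) y with hu
    set v := F x (y-1) with hv
    set w := F (x+1) (y-2) with hw
    have e1 : F x y = u / 2 + v / 2 := hrec x y hx (by omega) (by omega)
    have e2 : F (x+1) (y-1) = v / 2 + w / 2 := by
      have := hrec (x+1) (y-1) (by omega) (by omega) (by omega)
      simpa [show x + 1 - 1 = x by ring, show y - 1 - 1 = y - 2 by ring] using this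
    have hx1 : 2 ≤ u → 1 ≤ x := by
      intro h2u
      by_contra hc
      have : x - 1 < 0 := by omega
      rw [hu, hneg _ _ (Or.inl this)] at h2u
      omega
    rcases eq_or_lt_of_le h2 with he | hlt
    · -- x + 2 = y, center-adjacent
      have hwv : w = v := by
        rw [hw, hv, show y - 2 = x by omega, show y - 1 = x + 1 by omega]
        exact Fsymm F hneg hrec s (x+1) x (by push_cast; omega)
      rcases le_or_gt u 1 with hule | huge
      · have hu0 : u / 2 = 0 := by omega
        omega
      · have hx1' : 1 ≤ x := hx1 (by omega)
        have hIH : u / 2 < v / 2 := by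
          have := ih (x-1) y (by omega) (by omega) (by push_cast; omega) (by omega)
          simpa [show x - 1 + 1 = x by ring] using this
        omega
    · -- x + 3 ≤ y
      rcases le_or_gt u 1 with hule | huge
      · have hu0 : u / 2 = 0 := by omega
        have hv4 : 2 ≤ v := by omega
        have hIH : v / 2 < w / 2 := by
          have := ih x (y-1) hx (by omega) (by push_cast; omega) hv4
          simpa [show y - 1 - 1 = y - 2 by ring] using this
        omega
      · have hx1' : 1 ≤ x := hx1 (by omega)
        have hIH1 : u / 2 < v / 2 := by
          have := ih (x-1) y (by omega) (by omega) (by push_cast; omega) (by omega)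
          simpa [show x - 1 + 1 = x by ring] using this
        have hIH2 : v / 2 < w / 2 := by
          have := ih x (y-1) hx (by omega) (by push_cast; omega) (by omega)
          simpa [show y - 1 - 1 = y - 2 by ring] using this
        omega

include hneg hzero hrec in
lemma diag_step (m : ℤ) (hm : 1 ≤ m) (hnm : (n:ℤ) ≤ 2*m) (hpos : 0 < F m m) :
    F (m+1) (m+1) + 2 ≤ F m m := by
  have hsym1 : F m (m-1) = F (m-1) m :=
    Fsymm F hneg hrec (2*m-1).toNat m (m-1) (by omega)
  have heven : F m m = 2 * (F (m-1) m / 2) := by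
    have := hrec m m (by omega) (by omega) (by omega)
    rw [this, hsym1]
    ring
  have e3 : F m (m+1) = F (m-1) (m+1) / 2 + F m m / 2 := by
    have := hrec m (m+1) (by omega) (by omega) (by omega)
    simpa [show m + 1 - 1 = m by ring] using this
  have hsym2 : F (m+1) m = F m (m+1) :=
    Fsymm F hneg hrec (2*m+1).toNat (m+1) m (by omega)
  have e4 : F (m+1) (m+1) = 2 * (F m (m+1) / 2) := by
    have := hrec (m+1) (m+1) (by omega) (by omega) (by omega)
    rw [this, show m + 1 - 1 = m by ring, hsym2]
    ring
  have hE : F (m-1) (m+1) / 2 < F m m / 2 := by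
    rcases le_or_gt 2 (F (m-1) (m+1)) with hge | hlt
    · have := Rstrict n F hneg hzero hrec (2*m).toNat (by omega) (m-1) (m+1)
        (by omega) (by omega) (by omega) hge
      simpa [show m - 1 + 1 = m by ring] using this
    · omega
  omega

include hneg hzero hrec in
lemma zero_prop (m : ℤ) (hm : 1 ≤ m) (h0 : F m m = 0) : F (m+1) (m+1) = 0 := by
  have hmono : F (m-1) (m+1) ≤ F m m := by
    have := Fmono F hneg hrec (2*m).toNat (m-1) (m+1) (by omega) (by omega) (by omega)
    simpa [show m - 1 + 1 = m by ring] using this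
  have e3 : F m (m+1) = F (m-1) (m+1) / 2 + F m m / 2 := by
    have := hrec m (m+1) (by omega) (by omega) (by omega)
    simpa [show m + 1 - 1 = m by ring] using this
  have hsym2 : F (m+1) m = F m (m+1) :=
    Fsymm F hneg hrec (2*m+1).toNat (m+1) m (by omega)
  have e4 : F (m+1) (m+1) = 2 * (F m (m+1) / 2) := by
    have := hrec (m+1) (m+1) (by omega) (by omega) (by omega)
    rw [this, show m + 1 - 1 = m by ring, hsym2]
    ring
  omega

end Aux2

theorem stmt8 (n : ℕ) (hn : 2 ≤ n) (heven : Even n) (F : ℤ → ℤ → ℕ)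
    (hneg : ∀ x y : ℤ, x < 0 ∨ y < 0 → F x y = 0)
    (hzero : F 0 0 = 2 ^ n)
    (hrec : ∀ x y : ℤ, 0 ≤ x → 0 ≤ y → ¬(x = 0 ∧ y = 0) →
      F x y = F (x - 1) y / 2 + F x (y - 1) / 2) :
    F ((n / 2 : ℕ) + (Nat.choose n (n / 2) / 2 : ℕ))
      ((n / 2 : ℕ) + (Nat.choose n (n / 2) / 2 : ℕ)) = 0 ∧
    ∀ x y : ℤ, x + y = (n : ℤ) + (Nat.choose n (n / 2) : ℤ) + 1 → F x y = 0 := by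
  obtain ⟨h, hh⟩ := heven
  set C := Nat.choose n (n/2) with hC
  have hn2 : n = 2 * h := by omega
  have hh2 : n / 2 = h := by omega
  have hh1 : 1 ≤ h := by omega
  have hFC : F (h:ℤ) (h:ℤ) = C := by
    have := Finit n F hneg hzero hrec n h h (by omega) le_rfl
    simpa [hC, hh2, show h + h = n by omega] using this
  have hCeven : C % 2 = 0 := by
    have hps : (2*h-1) + 1 = 2*h := by omega
    have hps2 : (h-1) + 1 = h := by omega
    have e1 : Nat.choose (2*h) h = Nat.choose (2*h-1) (h-1) + Nat.choose (2*h-1) h := by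
      have e := Nat.choose_succ_succ (2*h-1) (h-1)
      simp only [Nat.succ_eq_add_one] at e
      rwa [hps, hps2] at e
    have e2 : Nat.choose (2*h-1) (h-1) = Nat.choose (2*h-1) h := by
      have := Nat.choose_symm (n := 2*h-1) (k := h) (by omega)
      rwa [show 2*h-1-h = h-1 by omega] at this
    have : C = Nat.choose (2*h) h := by rw [hC, hh2, hn2]
    omega
  have claim : ∀ j : ℕ, F ((h:ℤ)+j) ((h:ℤ)+j) = 0 ∨ F ((h:ℤ)+j) ((h:ℤ)+j) + 2*j ≤ C := by
    intro j
    induction j with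
    | zero => right; simpa using le_of_eq hFC
    | succ j ih =>
      have hcast : (h:ℤ) + (j+1:ℕ) = ((h:ℤ)+j) + 1 := by push_cast; ring
      rcases Nat.eq_zero_or_pos (F ((h:ℤ)+j) ((h:ℤ)+j)) with h0 | hpos
      · left
        rw [hcast]
        exact zero_prop n F hneg hzero hrec ((h:ℤ)+j) (by omega) h0
      · rcases ih with h0 | hle
        · omega
        · right
          have := diag_step n F hneg hzero hrec ((h:ℤ)+j) (by omega) (by omega) hpos
          rw [hcast]
          push_cast
          push_cast at hle
          omega
  set M : ℤ := (h:ℤ) + (C/2 : ℕ) with hM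
  have hMM : F M M = 0 := by
    have hcl := claim (C/2)
    rw [← hM] at hcl
    rcases hcl with h0 | hle
    · exact h0
    · omega
  have hM1 : 1 ≤ M := by omega
  have claim2 : ∀ d : ℕ, ∀ x : ℤ, x = M - d → 0 ≤ x → F x (2*M+1-x) = 0 := by
    intro d
    induction d with
    | zero =>
      intro x hxM _
      have hx : x = M := by omega
      subst hx
      have hmono : F (M-1) (M+1) ≤ F M M := by
        have := Fmono F hneg hrec (2*M).toNat (M-1) (M+1) (by omega) (by omega) (by omega)
        simpa [show M - 1 + 1 = M by ring] using this
      have e3 : F M (M+1) = F (M-1) (M+1) / 2 + F M M / 2 := by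
        have := hrec M (M+1) (by omega) (by omega) (by omega)
        simpa [show M + 1 - 1 = M by ring] using this
      rw [show 2*M+1-M = M+1 by ring]
      omega
    | succ d ih =>
      intro x hxM hx0
      have hmono : F x (2*M+1-x) ≤ F (x+1) (2*M+1-x-1) := by
        apply Fmono F hneg hrec (2*M+1).toNat x (2*M+1-x) (by omega) hx0 (by omega)
      have hih : F (x+1) (2*M+1-(x+1)) = 0 := ih (x+1) (by push_cast; omega) (by omega)
      rw [show 2*M+1-x-1 = 2*M+1-(x+1) by ring] at hmono
      omega
  constructor
  · have hMeq : (n:ℤ)/2 + (C:ℤ)/2 = M := by omega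
    rw [show ((n / 2 : ℕ) + (Nat.choose n (n / 2) / 2 : ℕ) : ℤ) = M from by rw [← hC]; omega]
    exact hMM
  intro x y hxy
  have hsum : x + y = 2*M + 1 := by omega
  rcases lt_or_ge x 0 with hx | hx
  · exact hneg x y (Or.inl hx)
  rcases lt_or_ge y 0 with hy | hy
  · exact hneg x y (Or.inr hy)
  rcases le_or_gt x M with hxM | hxM
  · have := claim2 (M - x).toNat x (by omega) hx
    rwa [show 2*M+1-x = y by omega] at this
  · have hsymm : F x y = F y x := Fsymm F hneg hrec (2*M+1).toNat x y (by omega)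
    have := claim2 (M - y).toNat y (by omega) hy
    rw [show 2*M+1-y = x by omega] at this
    rw [hsymm, this]
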